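/- Let S be a positive definite symmetric 2×2 real matrix, T a symmetric 2×2 real matrix, β, c ∈ ℝ, and a = a(β) = (β,1)ᵀ. Then the function x ↦ trace( (S⁻¹(T − cS − x·aaᵀ))² ), defined for x ∈ ℝ, is uniquely minimized at x̂ = (Q_T(β) − c)/(aᵀS⁻¹a), where Q_T(β) = (aᵀ S⁻¹ T S⁻¹ a)/(aᵀ S⁻¹ a), and its minimum value equals trace( (S⁻¹T − c·I₂)² ) − (Q_T(β) − c)². -/

import Mathlib

open Matrix

/-- `a(β) = (β, 1)ᵀ`. -/
def aVec (β : ℝ) : Fin 2 → ℝ := ![β, 1]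

/-- `Q_T(β) = (a(β)ᵀ S⁻¹ T S⁻¹ a(β))/(a(β)ᵀ S⁻¹ a(β))`. -/
noncomputable def QT (S T : Matrix (Fin 2) (Fin 2) ℝ) (β : ℝ) : ℝ :=
  (aVec β ⬝ᵥ (S⁻¹ * T * S⁻¹).mulVec (aVec β)) / (aVec β ⬝ᵥ S⁻¹.mulVec (aVec β))

lemma key_trace_quad (U T : Matrix (Fin 2) (Fin 2) ℝ) (u : Fin 2 → ℝ) (c x : ℝ) :
    ((U*T - c•(1:Matrix (Fin 2) (Fin 2) ℝ) - x•(U * vecMulVec u u))^2).trace =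
    ((U*T - c•(1:Matrix (Fin 2) (Fin 2) ℝ))^2).trace
      - 2*x*((u ⬝ᵥ (U*T*U).mulVec u) - c*(u ⬝ᵥ U.mulVec u))
      + x^2 * (u ⬝ᵥ U.mulVec u)^2 := by
  simp [Matrix.trace, Matrix.diag, pow_two, Matrix.mul_apply, vecMulVec, mulVec, dotProduct,
    Fin.sum_univ_two, Matrix.sub_apply, Matrix.smul_apply, Matrix.one_apply]
  ring

/-- `x ↦ trace((S⁻¹(T − cS − x·aaᵀ))²)` is uniquely minimized at
`x̂ = (Q_T(β) − c)/(aᵀS⁻¹a)` with minimal value `trace((S⁻¹T − cI)²) − (Q_T(β) − c)²`. -/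
theorem stmt_10 (S T : Matrix (Fin 2) (Fin 2) ℝ) (hS : S.PosDef) (hT : T.IsSymm)
    (β c : ℝ) :
    letI f : ℝ → ℝ := fun x =>
      ((S⁻¹ * (T - c • S - x • vecMulVec (aVec β) (aVec β))) ^ 2).trace
    letI xhat : ℝ := (QT S T β - c) / (aVec β ⬝ᵥ S⁻¹.mulVec (aVec β))
    f xhat = ((S⁻¹ * T - c • (1 : Matrix (Fin 2) (Fin 2) ℝ)) ^ 2).trace -
        (QT S T β - c) ^ 2 ∧
      ∀ x : ℝ, x ≠ xhat → f xhat < f x := by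
  set xhat : ℝ := (QT S T β - c) / (aVec β ⬝ᵥ S⁻¹.mulVec (aVec β)) with hxh
  set f : ℝ → ℝ := fun x =>
      ((S⁻¹ * (T - c • S - x • vecMulVec (aVec β) (aVec β))) ^ 2).trace with hfd
  have ha : aVec β ≠ 0 := by
    intro h
    have := congrFun h 1
    simp [aVec] at this
  have hs : 0 < aVec β ⬝ᵥ S⁻¹.mulVec (aVec β) := by
    have := hS.inv.dotProduct_mulVec_pos ha
    simpa using this
  set s : ℝ := aVec β ⬝ᵥ S⁻¹.mulVec (aVec β) with hs_def
  set q : ℝ := aVec β ⬝ᵥ (S⁻¹ * T * S⁻¹).mulVec (aVec β) with hq_def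
  have hsne : s ≠ 0 := ne_of_gt hs
  have hinv : S⁻¹ * S = 1 := Matrix.nonsing_inv_mul S (isUnit_iff_ne_zero.mpr hS.det_pos.ne')
  set C : ℝ := ((S⁻¹ * T - c • (1 : Matrix (Fin 2) (Fin 2) ℝ)) ^ 2).trace with hC_def
  have hf : ∀ x : ℝ, f x = C - 2*x*(q - c*s) + x^2 * s^2 := by
    intro x
    have hrw : S⁻¹ * (T - c • S - x • vecMulVec (aVec β) (aVec β)) =
        S⁻¹ * T - c • (1 : Matrix (Fin 2) (Fin 2) ℝ)
          - x • (S⁻¹ * vecMulVec (aVec β) (aVec β)) := by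
      rw [Matrix.mul_sub, Matrix.mul_sub, Matrix.mul_smul, Matrix.mul_smul, hinv]
    show ((S⁻¹ * (T - c • S - x • vecMulVec (aVec β) (aVec β))) ^ 2).trace = _
    rw [hrw]
    have := key_trace_quad S⁻¹ T (aVec β) c x
    rw [this]
  have hQ : QT S T β = q / s := rfl
  have hxhat : xhat = (q/s - c) / s := by rw [hxh, hQ]
  have hfx : f xhat = C - (q/s - c)^2 := by
    rw [hf, hxhat]
    field_simp
    ring
  constructor
  · rw [hfx, hQ]
  · intro x hx
    rw [hfx, hf]
    have hne : x - xhat ≠ 0 := sub_ne_zero.mpr hx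
    have h1 : (x - xhat) * s ≠ 0 := mul_ne_zero hne hsne
    have h2 : 0 < ((x - xhat) * s)^2 := by positivity
    have hexp : C - 2*x*(q - c*s) + x^2 * s^2 - (C - (q/s - c)^2) = ((x - xhat)*s)^2 := by
      rw [hxhat]
      field_simp
      ring
    linarith
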